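/- Let P be a nonempty monotone graph property on n vertices, viewed as a simplicial complex. If there is an integer d > 1 dividing |[G]| = n!/|Aut(G)| for every graph G in P, then d divides χ(P); consequently χ(P) ≠ 1, and if P is also nontrivial then P is evasive. -/

import Mathlib

open Classical

variable {α : Type*} [DecidableEq α]

/-- The link of a vertex `v`. -/
def linkCx (K : Finset (Finset α)) (v : α) : Finset (Finset α) :=
  K.filter (fun A => v ∉ A ∧ insert v A ∈ K)

/-- The deletion of a vertex `v`. -/
def delCx (K : Finset (Finset α)) (v : α) : Finset (Finset α) :=
  K.filter (fun A => v ∉ A)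

/-- Non-evasiveness of a simplicial complex (given by its nonempty faces). -/
inductive NonEvasive : Finset (Finset α) → Prop
  | point (v : α) : NonEvasive {({v} : Finset α)}
  | step (K : Finset (Finset α)) (v : α) (hv : ({v} : Finset α) ∈ K)
      (hlk : NonEvasive (linkCx K v)) (hdel : NonEvasive (delCx K v)) :
      NonEvasive K

/-- The simplicial complex associated to a graph property `P` on `n` vertices:
its faces are the (nonempty) edge sets of the graphs in `P`. -/
noncomputable def graphComplex (n : ℕ) (P : Finset (SimpleGraph (Fin n))) :
    Finset (Finset (Sym2 (Fin n))) :=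
  (P.image fun G => Finset.univ.filter (fun e : Sym2 (Fin n) => e ∈ G.edgeSet)).filter
    (·.Nonempty)

/-! ### Auxiliary results -/

lemma euler_of_nonEvasive {K : Finset (Finset α)} (h : NonEvasive K)
    (hN : ∀ A ∈ K, A.Nonempty)
    (hcl : ∀ A ∈ K, ∀ B ⊆ A, B.Nonempty → B ∈ K) :
    ∑ A ∈ K, (-1 : ℤ) ^ (A.card - 1) = 1 := by
  induction h with
  | point v => simp
  | step K v hv hlk hdel ihlk ihdel =>
    have hNdel : ∀ A ∈ delCx K v, A.Nonempty := fun A hA =>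
      hN A (Finset.mem_filter.mp hA).1
    have hcldel : ∀ A ∈ delCx K v, ∀ B ⊆ A, B.Nonempty → B ∈ delCx K v := by
      intro A hA B hBA hBne
      rw [delCx, Finset.mem_filter] at hA ⊢
      exact ⟨hcl A hA.1 B hBA hBne, fun hvB => hA.2 (hBA hvB)⟩
    have hNlk : ∀ A ∈ linkCx K v, A.Nonempty := fun A hA =>
      hN A (Finset.mem_filter.mp hA).1
    have hcllk : ∀ A ∈ linkCx K v, ∀ B ⊆ A, B.Nonempty → B ∈ linkCx K v := by
      intro A hA B hBA hBne
      rw [linkCx, Finset.mem_filter] at hA ⊢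
      refine ⟨hcl A hA.1 B hBA hBne, fun hvB => hA.2.1 (hBA hvB), ?_⟩
      exact hcl _ hA.2.2 _ (Finset.insert_subset_insert v hBA) ⟨v, Finset.mem_insert_self v _⟩
    have hdelsum := ihdel hNdel hcldel
    have hlksum := ihlk hNlk hcllk
    rw [← Finset.sum_filter_add_sum_filter_not K (fun A => v ∈ A)]
    have hdeleq : K.filter (fun A => ¬ v ∈ A) = delCx K v := rfl
    rw [hdeleq, hdelsum]
    have hvS : ({v} : Finset α) ∈ K.filter (fun A => v ∈ A) :=
      Finset.mem_filter.mpr ⟨hv, Finset.mem_singleton_self v⟩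
    rw [← Finset.sum_erase_add _ _ hvS]
    have hbij : ∑ A ∈ (K.filter (fun A => v ∈ A)).erase {v}, (-1 : ℤ) ^ (A.card - 1)
        = ∑ B ∈ linkCx K v, (-1 : ℤ) ^ (B.card) := by
      refine Finset.sum_bij' (fun A _ => A.erase v) (fun B _ => insert v B) ?_ ?_ ?_ ?_ ?_
      · intro A hA
        rw [Finset.mem_erase, Finset.mem_filter] at hA
        obtain ⟨hne, hAK, hvA⟩ := hA
        have hsub : A.erase v ⊆ A := Finset.erase_subset v A
        have hene : (A.erase v).Nonempty := by
          obtain ⟨a, ha, hav⟩ : ∃ a ∈ A, a ≠ v := by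
            by_contra hc
            push_neg at hc
            exact hne (Finset.eq_singleton_iff_unique_mem.mpr ⟨hvA, hc⟩)
          exact ⟨a, Finset.mem_erase.mpr ⟨hav, ha⟩⟩
        rw [linkCx, Finset.mem_filter]
        refine ⟨hcl A hAK _ hsub hene, Finset.notMem_erase v A, ?_⟩
        rwa [Finset.insert_erase hvA]
      · intro B hB
        rw [linkCx, Finset.mem_filter] at hB
        rw [Finset.mem_erase, Finset.mem_filter]
        refine ⟨?_, hB.2.2, Finset.mem_insert_self v B⟩
        intro hc
        obtain ⟨b, hb⟩ := hNlk B (by rw [linkCx, Finset.mem_filter]; exact hB)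
        have : b ∈ ({v} : Finset α) := hc ▸ Finset.mem_insert_of_mem hb
        rw [Finset.mem_singleton] at this
        exact hB.2.1 (this ▸ hb)
      · intro A hA
        rw [Finset.mem_erase, Finset.mem_filter] at hA
        exact Finset.insert_erase hA.2.2
      · intro B hB
        rw [linkCx, Finset.mem_filter] at hB
        exact Finset.erase_insert hB.2.1
      · intro A hA
        rw [Finset.mem_erase, Finset.mem_filter] at hA
        have hvA := hA.2.2
        have : ((A.erase v).card) = A.card - 1 := Finset.card_erase_of_mem hvA
        rw [this]
    rw [hbij]
    have : ∑ B ∈ linkCx K v, (-1 : ℤ) ^ (B.card)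
        = - ∑ B ∈ linkCx K v, (-1 : ℤ) ^ (B.card - 1) := by
      rw [← Finset.sum_neg_distrib]
      refine Finset.sum_congr rfl fun B hB => ?_
      have h1 : B.card - 1 + 1 = B.card :=
        Nat.succ_pred_eq_of_pos (Finset.card_pos.mpr (hNlk B hB))
      calc (-1 : ℤ) ^ B.card = (-1 : ℤ) ^ (B.card - 1 + 1) := by rw [h1]
        _ = -(-1 : ℤ) ^ (B.card - 1) := by rw [pow_succ]; ring
    rw [this, hlksum]
    simp

section GraphAction

variable {n : ℕ}

noncomputable instance permGraphAction (n : ℕ) :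
    MulAction (Equiv.Perm (Fin n)) (SimpleGraph (Fin n)) where
  smul σ G := G.map σ.toEmbedding
  one_smul G := by
    show G.map (Equiv.refl _).toEmbedding = G
    ext a b
    simp [SimpleGraph.map_adj]
  mul_smul σ τ G := by
    show G.map (σ * τ).toEmbedding = (G.map τ.toEmbedding).map σ.toEmbedding
    rw [SimpleGraph.map_map]
    have he : (σ * τ).toEmbedding = (Equiv.toEmbedding τ).trans (Equiv.toEmbedding σ) := by
      ext x; rfl
    rw [he]; rfl

lemma smul_graph_def (σ : Equiv.Perm (Fin n)) (G : SimpleGraph (Fin n)) :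
    σ • G = G.map σ.toEmbedding := rfl

/-- The stabilizer of `G` under the permutation action is its automorphism group. -/
noncomputable def stabEquivAut (G : SimpleGraph (Fin n)) :
    (MulAction.stabilizer (Equiv.Perm (Fin n)) G) ≃ (G ≃g G) where
  toFun σh :=
    { toEquiv := (σh : Equiv.Perm (Fin n))
      map_rel_iff' := by
        intro a b
        have h : G.map (σh : Equiv.Perm (Fin n)).toEmbedding = G := σh.2
        have h2 : (G.map (σh : Equiv.Perm (Fin n)).toEmbedding).Adj
            ((σh : Equiv.Perm (Fin n)) a) ((σh : Equiv.Perm (Fin n)) b)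
            ↔ G.Adj ((σh : Equiv.Perm (Fin n)) a) ((σh : Equiv.Perm (Fin n)) b) := by rw [h]
        rw [← h2]
        exact SimpleGraph.map_adj_apply (f := (σh : Equiv.Perm (Fin n)).toEmbedding) }
  invFun φ := ⟨φ.toEquiv, by
    show G.map φ.toEquiv.toEmbedding = G
    ext x y
    simp only [SimpleGraph.map_adj, Equiv.toEmbedding_apply]
    constructor
    · rintro ⟨a, b, hab, rfl, rfl⟩
      exact φ.map_adj_iff.mpr hab
    · intro hxy
      exact ⟨φ.symm x, φ.symm y, by simpa using φ.symm.map_adj_iff.mpr hxy,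
        φ.apply_symm_apply x, φ.apply_symm_apply y⟩⟩
  left_inv σh := rfl
  right_inv φ := rfl

noncomputable def orbitF (G : SimpleGraph (Fin n)) : Finset (SimpleGraph (Fin n)) :=
  Finset.univ.image (fun σ : Equiv.Perm (Fin n) => σ • G)

lemma mem_orbitF {G H : SimpleGraph (Fin n)} :
    H ∈ orbitF G ↔ ∃ σ : Equiv.Perm (Fin n), σ • G = H := by
  simp [orbitF]

lemma self_mem_orbitF (G : SimpleGraph (Fin n)) : G ∈ orbitF G :=
  mem_orbitF.mpr ⟨1, one_smul _ _⟩

lemma orbitF_card_mul (G : SimpleGraph (Fin n)) :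
    (orbitF G).card * Nat.card (G ≃g G) = n.factorial := by
  have hOrb : (MulAction.orbit (Equiv.Perm (Fin n)) G) = ↑(orbitF G) := by
    ext H
    simp [MulAction.mem_orbit_iff, mem_orbitF]
  have h := MulAction.card_orbit_mul_card_stabilizer_eq_card_group (Equiv.Perm (Fin n)) G
  rw [Fintype.card_perm, Fintype.card_fin] at h
  have h1 : Fintype.card (MulAction.orbit (Equiv.Perm (Fin n)) G) = (orbitF G).card := by
    rw [← Nat.card_eq_fintype_card]
    calc Nat.card (MulAction.orbit (Equiv.Perm (Fin n)) G)
        = Nat.card ((orbitF G : Set (SimpleGraph (Fin n)))) :=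
          Nat.card_congr (Equiv.setCongr hOrb)
      _ = (orbitF G).card := by rw [Nat.card_coe_set_eq, Set.ncard_coe_finset]
  have h2 : Nat.card (G ≃g G) = Fintype.card (MulAction.stabilizer (Equiv.Perm (Fin n)) G) := by
    rw [← Nat.card_eq_fintype_card]
    exact Nat.card_congr (stabEquivAut G).symm
  rw [h1] at h
  rw [h2]
  exact h

lemma orbitF_eq_of_mem {G H : SimpleGraph (Fin n)} (h : H ∈ orbitF G) :
    orbitF H = orbitF G := by
  obtain ⟨τ, rfl⟩ := mem_orbitF.mp h
  ext X
  rw [mem_orbitF, mem_orbitF]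
  constructor
  · rintro ⟨σ, rfl⟩; exact ⟨σ * τ, (mul_smul σ τ G)⟩
  · rintro ⟨σ, rfl⟩
    exact ⟨σ * τ⁻¹, by rw [mul_smul, inv_smul_smul]⟩

lemma dvd_sum_of_closed (d : ℕ) (f : SimpleGraph (Fin n) → ℤ)
    (hf : ∀ (G : SimpleGraph (Fin n)) (σ : Equiv.Perm (Fin n)), f (σ • G) = f G)
    (s : Finset (SimpleGraph (Fin n)))
    (hcl : ∀ G ∈ s, ∀ σ : Equiv.Perm (Fin n), σ • G ∈ s)
    (hdv : ∀ G ∈ s, (d : ℤ) ∣ ((orbitF G).card : ℤ)) :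
    (d : ℤ) ∣ ∑ G ∈ s, f G := by
  induction s using Finset.strongInduction with
  | _ s ih =>
    rcases s.eq_empty_or_nonempty with rfl | ⟨G, hG⟩
    · simp
    · have hsub : orbitF G ⊆ s := by
        intro H hH
        obtain ⟨σ, rfl⟩ := mem_orbitF.mp hH
        exact hcl G hG σ
      have hss : s \ orbitF G ⊂ s :=
        Finset.sdiff_ssubset hsub ⟨G, self_mem_orbitF G⟩
      rw [← Finset.sum_sdiff hsub]
      refine dvd_add (ih _ hss ?_ ?_) ?_
      · intro H hH σ
        rw [Finset.mem_sdiff] at hH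
        rw [Finset.mem_sdiff]
        refine ⟨hcl H hH.1 σ, fun hc => hH.2 ?_⟩
        rw [← orbitF_eq_of_mem hc]
        exact mem_orbitF.mpr ⟨σ⁻¹, inv_smul_smul σ H⟩
      · exact fun H hH => hdv H (Finset.mem_sdiff.mp hH).1
      · have hconst : ∀ H ∈ orbitF G, f H = f G := by
          intro H hH
          obtain ⟨σ, rfl⟩ := mem_orbitF.mp hH
          exact hf G σ
        rw [Finset.sum_congr rfl hconst, Finset.sum_const, nsmul_eq_mul]
        exact Dvd.dvd.mul_right (hdv G hG) _

noncomputable def edgeF (G : SimpleGraph (Fin n)) : Finset (Sym2 (Fin n)) :=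
  Finset.univ.filter (fun e : Sym2 (Fin n) => e ∈ G.edgeSet)

lemma mem_edgeF {G : SimpleGraph (Fin n)} {e : Sym2 (Fin n)} :
    e ∈ edgeF G ↔ e ∈ G.edgeSet := by
  simp [edgeF]

lemma edgeF_card (G : SimpleGraph (Fin n)) : (edgeF G).card = Nat.card G.edgeSet := by
  have h1 : G.edgeSet.toFinset = edgeF G := by
    ext e; simp [mem_edgeF]
  rw [Nat.card_coe_set_eq, Set.ncard_eq_toFinset_card', h1]

lemma edgeF_injective : Function.Injective (edgeF (n := n)) := by
  intro G H h
  apply SimpleGraph.edgeSet_injective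
  ext e
  rw [← mem_edgeF, ← mem_edgeF, h]

lemma edgeF_nonempty_iff {G : SimpleGraph (Fin n)} : (edgeF G).Nonempty ↔ G ≠ ⊥ := by
  rw [← SimpleGraph.edgeSet_nonempty]
  constructor
  · rintro ⟨e, he⟩; exact ⟨e, mem_edgeF.mp he⟩
  · rintro ⟨e, he⟩; exact ⟨e, mem_edgeF.mpr he⟩

lemma graphComplex_eq (n : ℕ) (P : Finset (SimpleGraph (Fin n))) :
    graphComplex n P = (P.filter (· ≠ ⊥)).image edgeF := by
  have hgc : graphComplex n P = (P.image edgeF).filter (·.Nonempty) := rfl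
  rw [hgc]
  ext A
  simp only [Finset.mem_filter, Finset.mem_image]
  constructor
  · rintro ⟨⟨G, hG, rfl⟩, hne⟩
    exact ⟨G, ⟨hG, edgeF_nonempty_iff.mp hne⟩, rfl⟩
  · rintro ⟨G, ⟨hG, hGb⟩, rfl⟩
    exact ⟨⟨G, hG, rfl⟩, edgeF_nonempty_iff.mpr hGb⟩

lemma graphComplex_sum (n : ℕ) (P : Finset (SimpleGraph (Fin n))) :
    ∑ A ∈ graphComplex n P, (-1 : ℤ) ^ (A.card - 1)
      = ∑ G ∈ P.filter (· ≠ ⊥), (-1 : ℤ) ^ (Nat.card G.edgeSet - 1) := by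
  rw [graphComplex_eq, Finset.sum_image (fun G _ H _ h => edgeF_injective h)]
  exact Finset.sum_congr rfl fun G _ => by rw [edgeF_card]

end GraphAction

theorem stmt_15 (n : ℕ) (P : Finset (SimpleGraph (Fin n)))
    (hne : P.Nonempty)
    (hmono : ∀ G ∈ P, ∀ H : SimpleGraph (Fin n), H ≤ G → H ∈ P)
    (hiso : ∀ G ∈ P, ∀ H : SimpleGraph (Fin n), Nonempty (G ≃g H) → H ∈ P)
    (d : ℕ) (hd : 1 < d)
    (hdvd : ∀ G ∈ P, G ≠ ⊥ → d ∣ n.factorial / Nat.card (G ≃g G)) :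
    (d : ℤ) ∣ ∑ G ∈ P.filter (· ≠ ⊥), (-1 : ℤ) ^ (Nat.card G.edgeSet - 1) ∧
    (∑ G ∈ P.filter (· ≠ ⊥), (-1 : ℤ) ^ (Nat.card G.edgeSet - 1)) ≠ 1 ∧
    ((∃ G : SimpleGraph (Fin n), G ∉ P) → ¬ NonEvasive (graphComplex n P)) := by
  -- the divisibility
  have hinv : ∀ (G : SimpleGraph (Fin n)) (σ : Equiv.Perm (Fin n)),
      Nat.card (σ • G).edgeSet = Nat.card G.edgeSet := by
    intro G σ
    rw [smul_graph_def]
    exact Nat.card_congr (SimpleGraph.Iso.mapEdgeSet (SimpleGraph.Iso.map σ G)).symm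
  have hdvd_sum : (d : ℤ) ∣ ∑ G ∈ P.filter (· ≠ ⊥), (-1 : ℤ) ^ (Nat.card G.edgeSet - 1) := by
    refine dvd_sum_of_closed d _ ?_ _ ?_ ?_
    · intro G σ
      rw [hinv G σ]
    · intro G hG σ
      rw [Finset.mem_filter] at hG ⊢
      constructor
      · exact hiso G hG.1 (σ • G) ⟨SimpleGraph.Iso.map σ G⟩
      · intro hc
        obtain ⟨e, he⟩ := SimpleGraph.edgeSet_nonempty.mpr hG.2
        have : (σ • G).edgeSet.Nonempty :=
          ⟨(SimpleGraph.Iso.mapEdgeSet (SimpleGraph.Iso.map σ G) ⟨e, he⟩ : _), Subtype.coe_prop _⟩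
        rw [hc] at this
        simp [SimpleGraph.edgeSet_bot] at this
    · intro G hG
      rw [Finset.mem_filter] at hG
      have hpos : 0 < Nat.card (G ≃g G) := by
        haveI : Finite (G ≃g G) := Finite.of_equiv _ (stabEquivAut G)
        haveI : Nonempty (G ≃g G) := ⟨SimpleGraph.Iso.refl⟩
        exact Nat.card_pos
      have hdiv : n.factorial / Nat.card (G ≃g G) = (orbitF G).card :=
        Nat.div_eq_of_eq_mul_left hpos (orbitF_card_mul G).symm
      have := hdvd G hG.1 hG.2
      rw [hdiv] at this
      exact_mod_cast this
  refine ⟨hdvd_sum, ?_, ?_⟩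
  · intro h1
    rw [h1] at hdvd_sum
    have h2 : (d : ℤ) ≤ 1 := Int.le_of_dvd one_pos hdvd_sum
    have : d ≤ 1 := by exact_mod_cast h2
    omega
  · intro _ hNE
    have hNfaces : ∀ A ∈ graphComplex n P, A.Nonempty := by
      intro A hA
      rw [graphComplex, Finset.mem_filter] at hA
      exact hA.2
    have hclosed : ∀ A ∈ graphComplex n P, ∀ B ⊆ A, B.Nonempty → B ∈ graphComplex n P := by
      intro A hA B hBA hBne
      rw [graphComplex_eq] at hA ⊢
      rw [Finset.mem_image] at hA
      obtain ⟨G, hG, rfl⟩ := hA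
      rw [Finset.mem_filter] at hG
      set H := SimpleGraph.fromEdgeSet (↑B : Set (Sym2 (Fin n))) with hH
      have hBsub : (↑B : Set (Sym2 (Fin n))) ⊆ G.edgeSet := fun e he =>
        mem_edgeF.mp (hBA he)
      have hHG : H ≤ G := by
        calc H ≤ SimpleGraph.fromEdgeSet G.edgeSet := SimpleGraph.fromEdgeSet_mono hBsub
          _ = G := SimpleGraph.fromEdgeSet_edgeSet G
      have hHP : H ∈ P := hmono G hG.1 H hHG
      have hfB : edgeF H = B := by
        ext e
        rw [mem_edgeF, hH, SimpleGraph.edgeSet_fromEdgeSet, Set.mem_diff]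
        constructor
        · rintro ⟨he, _⟩; exact he
        · intro he
          exact ⟨he, G.not_isDiag_of_mem_edgeSet (mem_edgeF.mp (hBA he))⟩
      rw [Finset.mem_image]
      refine ⟨H, Finset.mem_filter.mpr ⟨hHP, ?_⟩, hfB⟩
      rw [← edgeF_nonempty_iff, hfB]
      exact hBne
    have heuler := euler_of_nonEvasive hNE hNfaces hclosed
    rw [graphComplex_sum] at heuler
    rw [heuler] at hdvd_sum
    have h2 : (d : ℤ) ≤ 1 := Int.le_of_dvd one_pos hdvd_sum
    have : d ≤ 1 := by exact_mod_cast h2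
    omega
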